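/- Let U ⊆ ℂ^m be open, let η : U → ℂ be holomorphic and nowhere vanishing on U, and define h : U → ℝ by h(z) = |η(z)|². Then for every point p ∈ U, the negativity index of the Euclidean Hessian of h at p is at most m; that is, every real linear subspace W ⊆ ℂ^m on which the quadratic form v ↦ D²h(p)(v, v) (the second real Fréchet derivative of h at p evaluated twice on v) is negative definite satisfies dim_ℝ W ≤ m. -/

import Mathlib

open Complex

lemma aux_hasFDerivAt {m : ℕ} {U : Set (Fin m → ℂ)} (hU : IsOpen U)
    {η : (Fin m → ℂ) → ℂ} (hη : DifferentiableOn ℂ η U)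
    {q : Fin m → ℂ} (hq : q ∈ U) :
    HasFDerivAt (fun z => (η z * (starRingEnd ℂ) (η z)).re)
      (Complex.reCLM.comp
        (η q • (Complex.conjCLE.toContinuousLinearMap.comp ((fderiv ℂ η q).restrictScalars ℝ)) +
          (starRingEnd ℂ) (η q) • ((fderiv ℂ η q).restrictScalars ℝ))) q := by
  have hd : HasFDerivAt η ((fderiv ℂ η q).restrictScalars ℝ) q :=
    (((hη q hq).differentiableAt (hU.mem_nhds hq)).hasFDerivAt).restrictScalars ℝ
  have hconj : HasFDerivAt (fun z => (starRingEnd ℂ) (η z))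
      (Complex.conjCLE.toContinuousLinearMap.comp ((fderiv ℂ η q).restrictScalars ℝ)) q := by
    have := (Complex.conjCLE.toContinuousLinearMap.hasFDerivAt (x := η q)).comp q hd
    simpa [Function.comp_def] using this
  have hmul := hd.mul hconj
  have h2 := Complex.reCLM.hasFDerivAt.comp q hmul
  simpa only [Function.comp_def, Pi.mul_apply, Complex.reCLM_apply, mul_comm] using h2

/-- Second derivative along a line, expressed via the one-variable restriction `g`. -/
lemma aux_line {m : ℕ} {U : Set (Fin m → ℂ)} (hU : IsOpen U)
    {η : (Fin m → ℂ) → ℂ} (hη : DifferentiableOn ℂ η U)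
    {p : Fin m → ℂ} (hp : p ∈ U)
    (hdiff : DifferentiableAt ℝ (fderiv ℝ (fun z => (η z * (starRingEnd ℂ) (η z)).re)) p)
    (v : Fin m → ℂ) (g : ℂ → ℂ) (hg : g = fun w => η (p + w • v)) :
    (fderiv ℝ (fderiv ℝ (fun z => (η z * (starRingEnd ℂ) (η z)).re)) p v) v
      = (deriv g 0 * (starRingEnd ℂ) (deriv g 0) + (starRingEnd ℂ) (deriv g 0) * deriv g 0
          + g 0 * (starRingEnd ℂ) (deriv (deriv g) 0)
          + (starRingEnd ℂ) (g 0) * deriv (deriv g) 0).re := by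
  set hfun : (Fin m → ℂ) → ℝ := fun z => (η z * (starRingEnd ℂ) (η z)).re with hhfun
  -- the complex line
  set c : ℂ → (Fin m → ℂ) := fun w => p + w • v with hc
  have hcont : Continuous c := continuous_const.add (continuous_id.smul continuous_const)
  set s : Set ℂ := c ⁻¹' U with hs
  have hsopen : IsOpen s := hU.preimage hcont
  have h0s : (0 : ℂ) ∈ s := by simp [hs, hc, hp]
  have hcdiff : Differentiable ℂ c := by
    exact (differentiable_id.smul_const v).const_add p
  -- g is differentiable on s
  have hgd : DifferentiableOn ℂ g s := by
    rw [hg]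
    exact fun w hw => ((hη (c w) hw).comp w (hcdiff w).differentiableWithinAt
      (Set.mapsTo_preimage c U))
  have hga : AnalyticOnNhd ℂ g s := hgd.analyticOnNhd hsopen
  have hga' : AnalyticAt ℂ (deriv g) 0 := hga.deriv 0 h0s
  -- derivative of g along the line
  have hderiv_g : ∀ w ∈ s, HasDerivAt g (fderiv ℂ η (c w) v) w := by
    intro w hw
    have hcw : HasDerivAt c v w := by
      simpa [hc] using ((hasDerivAt_id w).smul_const v).const_add p
    have := (((hη (c w) hw).differentiableAt
      (hU.mem_nhds hw)).hasFDerivAt).comp_hasDerivAt w hcw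
    simpa [hg, hc, Function.comp_def] using this
  -- coercion of scalars
  have hsm : ∀ t : ℝ, ((t : ℂ)) • v = t • v := fun t => by
    rw [← Complex.coe_algebraMap]; exact algebraMap_smul ℂ t v
  -- the two functions on ℝ
  set φ : ℝ → ℝ := fun t => (fderiv ℝ hfun (p + t • v)) v with hφ
  set ψ : ℝ → ℝ := fun t =>
    (g t * (starRingEnd ℂ) (deriv g t) + (starRingEnd ℂ) (g t) * deriv g t).re with hψ
  have hev : φ =ᶠ[nhds (0:ℝ)] ψ := by
    have hmem : {t : ℝ | (t : ℂ) ∈ s} ∈ nhds (0 : ℝ) := by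
      have : IsOpen {t : ℝ | (t : ℂ) ∈ s} := hsopen.preimage Complex.continuous_ofReal
      exact this.mem_nhds (by simpa using h0s)
    filter_upwards [hmem] with t ht
    have hqU : c t ∈ U := ht
    have heq : p + t • v = c (t : ℂ) := by rw [hc]; simp [hsm t]
    have hfd := (aux_hasFDerivAt hU hη hqU).fderiv
    rw [hφ, hψ]
    simp only [heq, hhfun, hfd]
    have hdg : deriv g (t : ℂ) = fderiv ℂ η (c t) v := (hderiv_g t ht).deriv
    have hgt : g (t : ℂ) = η (c t) := by rw [hg]
    simp [hdg, hgt, ContinuousLinearMap.smul_apply, mul_comm]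
  -- derivative of φ at 0 is the Hessian entry
  have hT : HasFDerivAt (fderiv ℝ hfun) (fderiv ℝ (fderiv ℝ hfun) p) p := hdiff.hasFDerivAt
  have hγ : HasDerivAt (fun t : ℝ => p + t • v) v 0 := by
    simpa using ((hasDerivAt_id (0:ℝ)).smul_const v).const_add p
  have hcompγ : HasDerivAt (fun t : ℝ => fderiv ℝ hfun (p + t • v))
      (fderiv ℝ (fderiv ℝ hfun) p v) 0 := by
    have hT' : HasFDerivAt (fderiv ℝ hfun) (fderiv ℝ (fderiv ℝ hfun) p)
        ((fun t : ℝ => p + t • v) 0) := by simpa using hT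
    have := hT'.comp_hasDerivAt (f := fun t : ℝ => p + t • v) 0 hγ
    simpa [Function.comp_def] using this
  have hφd : HasDerivAt φ ((fderiv ℝ (fderiv ℝ hfun) p v) v) 0 := by
    have := (ContinuousLinearMap.apply ℝ ℝ v).hasFDerivAt.comp_hasDerivAt 0 hcompγ
    simpa [hφ, Function.comp_def] using this
  -- derivative of ψ at 0
  have hb : HasDerivAt g (deriv g 0) 0 := ((hga 0 h0s).differentiableAt).hasDerivAt
  have hcder : HasDerivAt (deriv g) (deriv (deriv g) 0) 0 := hga'.differentiableAt.hasDerivAt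
  have hG1 : HasDerivAt (fun t : ℝ => g t) (deriv g 0) 0 := by
    have := hb.comp_ofReal (z := 0)
    simpa using this
  have hG2 : HasDerivAt (fun t : ℝ => deriv g t) (deriv (deriv g) 0) 0 := by
    have := hcder.comp_ofReal (z := 0)
    simpa using this
  have hG1c : HasDerivAt (fun t : ℝ => (starRingEnd ℂ) (g t))
      ((starRingEnd ℂ) (deriv g 0)) 0 := by
    have := Complex.conjCLE.toContinuousLinearMap.hasFDerivAt.comp_hasDerivAt 0 hG1
    simpa [Function.comp_def] using this
  have hG2c : HasDerivAt (fun t : ℝ => (starRingEnd ℂ) (deriv g t))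
      ((starRingEnd ℂ) (deriv (deriv g) 0)) 0 := by
    have := Complex.conjCLE.toContinuousLinearMap.hasFDerivAt.comp_hasDerivAt 0 hG2
    simpa [Function.comp_def] using this
  have hsum : HasDerivAt (fun t : ℝ =>
      g t * (starRingEnd ℂ) (deriv g t) + (starRingEnd ℂ) (g t) * deriv g t)
      (deriv g 0 * (starRingEnd ℂ) (deriv g 0) + g 0 * (starRingEnd ℂ) (deriv (deriv g) 0)
        + ((starRingEnd ℂ) (deriv g 0) * deriv g 0
            + (starRingEnd ℂ) (g 0) * deriv (deriv g) 0)) 0 := by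
    have h1 := hG1.mul hG2c
    have h2 := hG1c.mul hG2
    have := h1.add h2
    simpa [Function.comp_def, Pi.mul_def, Pi.add_def] using this
  have hψd : HasDerivAt ψ
      ((deriv g 0 * (starRingEnd ℂ) (deriv g 0) + g 0 * (starRingEnd ℂ) (deriv (deriv g) 0)
        + ((starRingEnd ℂ) (deriv g 0) * deriv g 0
            + (starRingEnd ℂ) (g 0) * deriv (deriv g) 0)).re) 0 := by
    have := Complex.reCLM.hasFDerivAt.comp_hasDerivAt 0 hsum
    simpa only [hψ, Function.comp_def, Complex.reCLM_apply] using this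
  have hφd' : HasDerivAt φ
      ((deriv g 0 * (starRingEnd ℂ) (deriv g 0) + g 0 * (starRingEnd ℂ) (deriv (deriv g) 0)
        + ((starRingEnd ℂ) (deriv g 0) * deriv g 0
            + (starRingEnd ℂ) (g 0) * deriv (deriv g) 0)).re) 0 :=
    hψd.congr_of_eventuallyEq hev
  have := hφd.unique hφd'
  rw [this]
  ring_nf


/-- The key inequality: the Hessian quadratic form of `|η|²` at `p`, evaluated at `v` and at
`I • v`, sums to something nonnegative. -/
lemma aux_key {m : ℕ} {U : Set (Fin m → ℂ)} (hU : IsOpen U)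
    {η : (Fin m → ℂ) → ℂ} (hη : DifferentiableOn ℂ η U)
    {p : Fin m → ℂ} (hp : p ∈ U) (v : Fin m → ℂ) :
    0 ≤ (fderiv ℝ (fderiv ℝ (fun z => (η z * (starRingEnd ℂ) (η z)).re)) p v) v
        + (fderiv ℝ (fderiv ℝ (fun z => (η z * (starRingEnd ℂ) (η z)).re)) p
            (Complex.I • v)) (Complex.I • v) := by
  by_cases hdiff :
      DifferentiableAt ℝ (fderiv ℝ (fun z => (η z * (starRingEnd ℂ) (η z)).re)) p
  · -- setup (same as in aux_line)
    set g : ℂ → ℂ := fun w => η (p + w • v) with hgdef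
    set g₂ : ℂ → ℂ := fun w => g (w * Complex.I) with hg2def
    have hg2 : g₂ = fun w => η (p + w • (Complex.I • v)) := by
      funext w
      rw [hg2def, hgdef]
      simp [smul_smul]
    set c : ℂ → (Fin m → ℂ) := fun w => p + w • v with hc
    have hcont : Continuous c := continuous_const.add (continuous_id.smul continuous_const)
    set s : Set ℂ := c ⁻¹' U with hs
    have hsopen : IsOpen s := hU.preimage hcont
    have h0s : (0 : ℂ) ∈ s := by simp [hs, hc, hp]
    have hcdiff : Differentiable ℂ c := (differentiable_id.smul_const v).const_add p
    have hgd : DifferentiableOn ℂ g s := by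
      exact fun w hw => ((hη (c w) hw).comp w (hcdiff w).differentiableWithinAt
        (Set.mapsTo_preimage c U))
    have hga : AnalyticOnNhd ℂ g s := hgd.analyticOnNhd hsopen
    have hga' : AnalyticAt ℂ (deriv g) 0 := hga.deriv 0 h0s
    -- derivatives of g₂ in terms of derivatives of g
    have hmulI : ∀ᶠ w in nhds (0 : ℂ), w * Complex.I ∈ s := by
      have : Continuous fun w : ℂ => w * Complex.I := continuous_id.mul continuous_const
      have hopen : IsOpen {w : ℂ | w * Complex.I ∈ s} := hsopen.preimage this
      exact hopen.mem_nhds (by simpa using h0s)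
    have hd2 : ∀ᶠ w in nhds (0 : ℂ), deriv g₂ w = deriv g (w * Complex.I) * Complex.I := by
      filter_upwards [hmulI] with w hw
      have hgat : HasDerivAt g (deriv g (w * Complex.I)) (w * Complex.I) :=
        ((hgd (w * Complex.I) hw).differentiableAt (hsopen.mem_nhds hw)).hasDerivAt
      have := hgat.comp w (hasDerivAt_mul_const Complex.I)
      exact this.deriv
    have hderiv2_0 : deriv g₂ 0 = deriv g 0 * Complex.I := by
      have := hd2.self_of_nhds
      simpa using this
    have hsecond : deriv (deriv g₂) 0 = -(deriv (deriv g) 0) := by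
      rw [Filter.EventuallyEq.deriv_eq hd2]
      have h1 : HasDerivAt (fun w => deriv g (w * Complex.I))
          (deriv (deriv g) 0 * Complex.I) 0 := by
        have hat : HasDerivAt (deriv g) (deriv (deriv g) 0) ((0 : ℂ) * Complex.I) := by
          simpa using hga'.differentiableAt.hasDerivAt
        exact hat.comp 0 (hasDerivAt_mul_const Complex.I)
      have h2 := h1.mul_const Complex.I
      rw [h2.deriv]
      simp [mul_assoc, Complex.I_mul_I]
    -- apply the line lemma twice
    have e1 := aux_line hU hη hp hdiff v g hgdef
    have e2 := aux_line hU hη hp hdiff (Complex.I • v) g₂ hg2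
    rw [e1, e2, hderiv2_0, hsecond]
    have hg20 : g₂ 0 = g 0 := by rw [hg2def]; simp
    rw [hg20]
    set a := g 0
    set b := deriv g 0
    set d := deriv (deriv g) 0
    simp only [map_mul, map_neg, Complex.conj_I, Complex.add_re, Complex.mul_re,
      Complex.mul_im, Complex.neg_re, Complex.neg_im, Complex.conj_re, Complex.conj_im,
      Complex.I_re, Complex.I_im]
    nlinarith [sq_nonneg b.re, sq_nonneg b.im]
  · rw [fderiv_zero_of_not_differentiableAt hdiff]
    simp

/-- If `η` is a nowhere-vanishing holomorphic function on an open set `U ⊆ ℂ^m` and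
`h(z) = |η(z)|²`, then at every `p ∈ U` the negativity index of the Euclidean Hessian of `h`
is at most `m`: every real subspace on which the quadratic form `v ↦ D²h(p)(v, v)` is negative
definite has real dimension at most `m`. -/
theorem hessian_negativity_index_le
    (m : ℕ) (U : Set (Fin m → ℂ)) (hU : IsOpen U)
    (η : (Fin m → ℂ) → ℂ) (hη : DifferentiableOn ℂ η U)
    (hη0 : ∀ z ∈ U, η z ≠ 0)
    (h : (Fin m → ℂ) → ℝ) (hh : ∀ z, h z = ‖η z‖ ^ 2)
    (p : Fin m → ℂ) (hp : p ∈ U)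
    (W : Submodule ℝ (Fin m → ℂ))
    (hW : ∀ v ∈ W, v ≠ 0 → (fderiv ℝ (fderiv ℝ h) p v) v < 0) :
    Module.finrank ℝ W ≤ m := by
  have hfun : h = fun z => (η z * (starRingEnd ℂ) (η z)).re := by
    funext z
    rw [hh, Complex.mul_conj, Complex.ofReal_re, ← Complex.sq_norm]
  subst hfun
  have key := fun v => aux_key hU hη hp v
  -- multiplication by I as a real-linear equivalence
  set J : (Fin m → ℂ) ≃ₗ[ℝ] (Fin m → ℂ) :=
    (LinearEquiv.smulOfNeZero ℂ (Fin m → ℂ) Complex.I Complex.I_ne_zero).restrictScalars ℝ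
    with hJ
  have hJapp : ∀ x, J x = Complex.I • x := fun x => rfl
  have hdisj : W ⊓ W.map (J : (Fin m → ℂ) →ₗ[ℝ] (Fin m → ℂ)) = ⊥ := by
    rw [eq_bot_iff]
    intro x hx
    rw [Submodule.mem_inf] at hx
    obtain ⟨hx1, hx2⟩ := hx
    rw [Submodule.mem_map] at hx2
    obtain ⟨w, hw, rfl⟩ := hx2
    rw [Submodule.mem_bot]
    by_contra hne
    have hw0 : w ≠ 0 := by
      rintro rfl
      exact hne (map_zero _)
    have hQx := hW _ hx1 hne
    have hQw := hW w hw hw0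
    have := key w
    have hIw : (J : (Fin m → ℂ) →ₗ[ℝ] (Fin m → ℂ)) w = Complex.I • w := rfl
    rw [hIw] at hQx
    linarith
  have hmapeq : Module.finrank ℝ (W.map (J : (Fin m → ℂ) →ₗ[ℝ] (Fin m → ℂ)))
      = Module.finrank ℝ W := LinearEquiv.finrank_map_eq J W
  have hsum := Submodule.finrank_sup_add_finrank_inf_eq W
    (W.map (J : (Fin m → ℂ) →ₗ[ℝ] (Fin m → ℂ)))
  rw [hdisj] at hsum
  have hle : Module.finrank ℝ
      ↥(W ⊔ W.map (J : (Fin m → ℂ) →ₗ[ℝ] (Fin m → ℂ))) ≤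
      Module.finrank ℝ (Fin m → ℂ) := Submodule.finrank_le _
  have htot : Module.finrank ℝ (Fin m → ℂ) = 2 * m := by
    simp [Module.finrank_pi_fintype, Complex.finrank_real_complex, Finset.sum_const,
      mul_comm]
  simp only [finrank_bot, add_zero] at hsum
  omega
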